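/- Let U ⊆ ℝⁿ be open, let f : U → ℝ be C², let c ∈ U with ∇f(c) = 0, and suppose the closed ball of radius ε > 0 around c is contained in U. For 0 < r ≤ ε define m(r) = min{f(x) : ‖x − c‖ = r}. Then m(r) = f(c) + (μ₁/2) r² + o(r²) as r → 0⁺, where μ₁ is the smallest eigenvalue of the Hessian ∇²f(c); that is, (m(r) − f(c) − (μ₁/2) r²)/r² → 0 as r → 0⁺. -/

import Mathlib

open Filter InnerProductSpace

noncomputable def dualIsoReal (E : Type*) [NormedAddCommGroup E] [InnerProductSpace ℝ E]
    [CompleteSpace E] : StrongDual ℝ E ≃ₗᵢ[ℝ] E where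
  toFun := (toDual ℝ E).symm
  invFun := toDual ℝ E
  map_add' := map_add _
  map_smul' := fun r x => by
    have := (toDual ℝ E).symm.map_smulₛₗ r x
    simpa using this
  left_inv := (toDual ℝ E).apply_symm_apply
  right_inv := (toDual ℝ E).symm_apply_apply
  norm_map' := (toDual ℝ E).symm.norm_map

set_option maxHeartbeats 1000000 in
/-- For a `C²` function `f` with critical point `c`, the minimum `m(r)`
of `f` over the sphere of radius `r` around `c` satisfies
`m(r) = f(c) + (μ₁/2) r² + o(r²)` as `r → 0⁺`, where `μ₁` is the smallest eigenvalue
of the Hessian `∇²f(c)` (realized as the derivative of the gradient at `c`). -/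
theorem min_on_sphere_asymptotics {n : ℕ}
    (U : Set (EuclideanSpace ℝ (Fin n))) (hU : IsOpen U)
    (f : EuclideanSpace ℝ (Fin n) → ℝ) (hf : ContDiffOn ℝ 2 f U)
    (c : EuclideanSpace ℝ (Fin n)) (hc : c ∈ U) (hcrit : gradient f c = 0)
    (ε : ℝ) (hε : 0 < ε) (hball : Metric.closedBall c ε ⊆ U)
    (m : ℝ → ℝ)
    (hm : ∀ r ∈ Set.Ioc (0 : ℝ) ε,
      (∃ x : EuclideanSpace ℝ (Fin n), ‖x - c‖ = r ∧ f x = m r) ∧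
      ∀ x : EuclideanSpace ℝ (Fin n), ‖x - c‖ = r → m r ≤ f x)
    (μ₁ : ℝ)
    (hμeig : ∃ v : EuclideanSpace ℝ (Fin n), v ≠ 0 ∧ fderiv ℝ (gradient f) c v = μ₁ • v)
    (hμmin : ∀ (μ : ℝ) (w : EuclideanSpace ℝ (Fin n)), w ≠ 0 →
      fderiv ℝ (gradient f) c w = μ • w → μ₁ ≤ μ) :
    Tendsto (fun r => (m r - f c - μ₁ / 2 * r ^ 2) / r ^ 2)
      (nhdsWithin 0 (Set.Ioi 0)) (nhds 0) := by
  obtain ⟨v, hv0, hvT⟩ := hμeig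
  haveI : Nontrivial (EuclideanSpace ℝ (Fin n)) := nontrivial_of_ne v 0 hv0
  set T : EuclideanSpace ℝ (Fin n) →L[ℝ] EuclideanSpace ℝ (Fin n) := fderiv ℝ (gradient f) c with hTdef
  -- basic differentiability facts
  have hfc : ContDiffAt ℝ 2 f c := hf.contDiffAt (hU.mem_nhds hc)
  have hdiff : ∀ x ∈ U, DifferentiableAt ℝ f x := fun x hx =>
    (hf.contDiffAt (hU.mem_nhds hx)).differentiableAt (by norm_num)
  have hf' : DifferentiableAt ℝ (fderiv ℝ f) c :=
    (hfc.fderiv_right (m := 1) (by norm_num)).differentiableAt one_ne_zero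
  -- fderiv of f expressed via gradient
  have hfd : ∀ x ∈ U, fderiv ℝ f x = innerSL ℝ (gradient f x) := by
    intro x hx
    ext w
    rw [innerSL_apply_apply]
    show (fderiv ℝ f x) w = ⟪(toDual ℝ _).symm (fderiv ℝ f x), w⟫_ℝ
    exact toDual_symm_apply.symm
  -- derivative of the gradient
  have hHgrad : HasFDerivAt (gradient f) T c := by
    have h1 : gradient f = fun y => (dualIsoReal (EuclideanSpace ℝ (Fin n))).toContinuousLinearEquiv (fderiv ℝ f y) := rfl
    have h2 : HasFDerivAt (gradient f)
        (((dualIsoReal (EuclideanSpace ℝ (Fin n))).toContinuousLinearEquiv : StrongDual ℝ (EuclideanSpace ℝ (Fin n)) →L[ℝ] EuclideanSpace ℝ (Fin n)).comp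
          (fderiv ℝ (fderiv ℝ f) c)) c := by
      rw [h1]
      exact ((dualIsoReal (EuclideanSpace ℝ (Fin n))).toContinuousLinearEquiv.hasFDerivAt).comp c hf'.hasFDerivAt
    rw [hTdef, h2.fderiv]
    exact h2
  -- second-derivative formula for T
  have hkey : ∀ u w : EuclideanSpace ℝ (Fin n), ⟪w, T u⟫_ℝ = fderiv ℝ (fderiv ℝ f) c u w := by
    intro u w
    have h1 : HasFDerivAt (fun y => ⟪w, gradient f y⟫_ℝ) ((innerSL ℝ w).comp T) c :=
      ((innerSL ℝ w).hasFDerivAt).comp c hHgrad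
    have h2 : HasFDerivAt (fun y => ⟪w, gradient f y⟫_ℝ)
        ((ContinuousLinearMap.apply ℝ ℝ w).comp (fderiv ℝ (fderiv ℝ f) c)) c := by
      have heq : (fun y => ⟪w, gradient f y⟫_ℝ)
          = fun y => (ContinuousLinearMap.apply ℝ ℝ w) (fderiv ℝ f y) := by
        funext y
        simp only [ContinuousLinearMap.apply_apply]
        rw [real_inner_comm]
        show ⟪(toDual ℝ _).symm (fderiv ℝ f y), w⟫_ℝ = (fderiv ℝ f y) w
        exact toDual_symm_apply
      rw [heq]
      exact ((ContinuousLinearMap.apply ℝ ℝ w).hasFDerivAt).comp c hf'.hasFDerivAt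
    have := h1.unique h2
    calc ⟪w, T u⟫_ℝ = ((innerSL ℝ w).comp T) u := rfl
      _ = ((ContinuousLinearMap.apply ℝ ℝ w).comp (fderiv ℝ (fderiv ℝ f) c)) u := by rw [this]
      _ = fderiv ℝ (fderiv ℝ f) c u w := rfl
  -- symmetry
  have hsnd : IsSymmSndFDerivAt ℝ f c := hfc.isSymmSndFDerivAt (by simp [minSmoothness_of_isRCLikeNormedField])
  have hTsym : (T : EuclideanSpace ℝ (Fin n) →ₗ[ℝ] EuclideanSpace ℝ (Fin n)).IsSymmetric := by
    intro x y
    show ⟪T x, y⟫_ℝ = ⟪x, T y⟫_ℝ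
    have h1 : ⟪T x, y⟫_ℝ = fderiv ℝ (fderiv ℝ f) c x y := by
      rw [real_inner_comm]; exact hkey x y
    have h2 : ⟪x, T y⟫_ℝ = fderiv ℝ (fderiv ℝ f) c y x := hkey y x
    rw [h1, h2]
    exact hsnd x y
  -- quadratic form lower bound
  have hquad : ∀ h : EuclideanSpace ℝ (Fin n), μ₁ * ‖h‖ ^ 2 ≤ ⟪T h, h⟫_ℝ := by
    have hbdd : BddBelow (Set.range fun x : {x : EuclideanSpace ℝ (Fin n) // x ≠ 0} =>
        RCLike.re ⟪(T : EuclideanSpace ℝ (Fin n) →ₗ[ℝ] EuclideanSpace ℝ (Fin n)) x, x⟫_ℝ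
          / ‖(x : EuclideanSpace ℝ (Fin n))‖ ^ 2) := by
      refine ⟨-‖T‖, ?_⟩
      rintro y ⟨x, rfl⟩
      have hx0 : ‖(x : EuclideanSpace ℝ (Fin n))‖ ≠ 0 := norm_ne_zero_iff.mpr x.2
      have hx : (0:ℝ) < ‖(x : EuclideanSpace ℝ (Fin n))‖ ^ 2 := by positivity
      rw [le_div_iff₀ hx]
      have h1 : |⟪T x, (x : EuclideanSpace ℝ (Fin n))⟫_ℝ| ≤ ‖T‖ * ‖(x:EuclideanSpace ℝ (Fin n))‖^2 := by
        calc |⟪T x, (x : EuclideanSpace ℝ (Fin n))⟫_ℝ| ≤ ‖T x‖ * ‖(x:EuclideanSpace ℝ (Fin n))‖ :=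
              abs_real_inner_le_norm _ _
          _ ≤ (‖T‖ * ‖(x:EuclideanSpace ℝ (Fin n))‖) * ‖(x:EuclideanSpace ℝ (Fin n))‖ := by
              gcongr; exact T.le_opNorm _
          _ = ‖T‖ * ‖(x:EuclideanSpace ℝ (Fin n))‖^2 := by ring
      have := neg_abs_le ⟪T x, (x : EuclideanSpace ℝ (Fin n))⟫_ℝ
      simp only [RCLike.re_to_real, ContinuousLinearMap.coe_coe]
      nlinarith [abs_nonneg ⟪T x, (x : EuclideanSpace ℝ (Fin n))⟫_ℝ]
    have heig := hTsym.hasEigenvalue_iInf_of_finiteDimensional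
    obtain ⟨w, hw⟩ := heig.exists_hasEigenvector
    set μ := ⨅ x : {x : EuclideanSpace ℝ (Fin n) // x ≠ 0},
        RCLike.re ⟪(T : EuclideanSpace ℝ (Fin n) →ₗ[ℝ] EuclideanSpace ℝ (Fin n)) x, x⟫_ℝ
          / ‖(x : EuclideanSpace ℝ (Fin n))‖ ^ 2 with hμdef
    have hTw : T w = μ • w := by
      have := hw.apply_eq_smul
      simpa using this
    have hμ1 : μ₁ ≤ μ := hμmin μ w hw.2 hTw
    intro h
    rcases eq_or_ne h 0 with rfl | hh
    · simp
    · have hle : μ ≤ RCLike.re ⟪(T : EuclideanSpace ℝ (Fin n) →ₗ[ℝ] EuclideanSpace ℝ (Fin n)) h, h⟫_ℝ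
          / ‖h‖ ^ 2 := ciInf_le hbdd ⟨h, hh⟩
      have hn : (0:ℝ) < ‖h‖ ^ 2 := by
        have hp : (0:ℝ) < ‖h‖ := norm_pos_iff.mpr hh
        positivity
      have hle2 : μ * ‖h‖^2 ≤ ⟪T h, h⟫_ℝ := by
        simp only [RCLike.re_to_real, ContinuousLinearMap.coe_coe] at hle
        have := (le_div_iff₀ hn).mp hle
        linarith
      calc μ₁ * ‖h‖^2 ≤ μ * ‖h‖^2 := by nlinarith [hn]
        _ ≤ ⟪T h, h⟫_ℝ := hle2
  -- Taylor expansion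
  have taylor : ∀ δ : ℝ, 0 < δ → ∃ r₀ > 0, r₀ ≤ ε ∧ ∀ x : EuclideanSpace ℝ (Fin n), ‖x - c‖ ≤ r₀ →
      |f x - f c - ⟪T (x - c), x - c⟫_ℝ / 2| ≤ δ * ‖x - c‖ ^ 2 := by
    intro δ hδ
    have hev : ∀ᶠ y in nhds c, ‖gradient f y - gradient f c - T (y - c)‖ ≤ δ * ‖y - c‖ :=
      hHgrad.isLittleO.def hδ
    rw [Metric.eventually_nhds_iff] at hev
    obtain ⟨ρ, hρ, hρball⟩ := hev
    refine ⟨min (ρ/2) ε, by positivity, min_le_right _ _, ?_⟩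
    intro x hx
    rcases eq_or_ne x c with rfl | hxc
    · simp
    have hr0 : 0 < ‖x - c‖ := norm_pos_iff.mpr (sub_ne_zero.mpr hxc)
    set r := ‖x - c‖ with hrdef
    have hrρ : r < ρ := lt_of_le_of_lt (le_trans hx (min_le_left _ _)) (by linarith)
    have hrε : r ≤ ε := le_trans hx (min_le_right _ _)
    have hsub : Metric.closedBall c r ⊆ U := fun y hy =>
      hball (Metric.closedBall_subset_closedBall hrε hy)
    have hgradb : ∀ y ∈ Metric.closedBall c r, ‖gradient f y - T (y - c)‖ ≤ δ * r := by
      intro y hy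
      have hyc : ‖y - c‖ ≤ r := by
        rw [← dist_eq_norm]; exact Metric.mem_closedBall.mp hy
      have := hρball (y := y) (by rw [dist_eq_norm]; exact lt_of_le_of_lt hyc hrρ)
      rw [hcrit, sub_zero] at this
      calc ‖gradient f y - T (y - c)‖ ≤ δ * ‖y - c‖ := this
        _ ≤ δ * r := by nlinarith
    have hre : ∀ z : EuclideanSpace ℝ (Fin n), T.reApplyInnerSelf z = ⟪T z, z⟫_ℝ := fun z => rfl
    have hder : ∀ y ∈ Metric.closedBall c r,
        HasFDerivWithinAt (fun z => f z - T.reApplyInnerSelf (z - c) / 2)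
          (innerSL ℝ (gradient f y - T (y - c))) (Metric.closedBall c r) y := by
      intro y hy
      have hyU : y ∈ U := hsub hy
      have h1 : HasFDerivAt f (innerSL ℝ (gradient f y)) y := by
        rw [← hfd y hyU]; exact (hdiff y hyU).hasFDerivAt
      have h2 : HasFDerivAt (fun z => T.reApplyInnerSelf (z - c))
          (((2 • (innerSL ℝ (T (y - c)))).comp (ContinuousLinearMap.id ℝ _))) y := by
        have ha := (hTsym.hasStrictFDerivAt_reApplyInnerSelf (y - c)).hasFDerivAt
        have hb : HasFDerivAt (fun z : EuclideanSpace ℝ (Fin n) => z - c)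
            (ContinuousLinearMap.id ℝ _) y := (hasFDerivAt_id y).sub_const c
        exact ha.comp y hb
      have h3 := h1.sub (h2.const_smul (2⁻¹ : ℝ))
      refine HasFDerivAt.hasFDerivWithinAt ?_
      have hfun : (fun z => f z - T.reApplyInnerSelf (z - c) / 2)
          = fun z => f z - (2⁻¹:ℝ) • T.reApplyInnerSelf (z - c) := by
        funext z; rw [smul_eq_mul]; ring
      rw [hfun]
      refine h3.congr_fderiv ?_
      ext u
      simp only [innerSL_apply_apply, ContinuousLinearMap.sub_apply, ContinuousLinearMap.smul_apply,
        ContinuousLinearMap.comp_apply, ContinuousLinearMap.id_apply, inner_sub_left,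
        ContinuousLinearMap.coe_smul', Pi.smul_apply, smul_eq_mul, two_smul,
        ContinuousLinearMap.add_apply]
      ring
    have hbound : ∀ y ∈ Metric.closedBall c r,
        ‖innerSL ℝ (gradient f y - T (y - c))‖ ≤ δ * r := by
      intro y hy
      rw [innerSL_apply_norm]
      exact hgradb y hy
    have hMVT := (convex_closedBall c r).norm_image_sub_le_of_norm_hasFDerivWithin_le
      hder hbound (Metric.mem_closedBall_self hr0.le)
      (by rw [Metric.mem_closedBall, dist_eq_norm])
    simp only [sub_self] at hMVT
    have hTc : T.reApplyInnerSelf (0 : EuclideanSpace ℝ (Fin n)) = 0 := by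
      rw [hre]; simp
    rw [hTc] at hMVT
    rw [hre] at hMVT
    rw [Real.norm_eq_abs] at hMVT
    have habs : |f x - f c - ⟪T (x - c), x - c⟫_ℝ / 2| ≤ δ * r * r := by
      rw [show f x - f c - ⟪T (x - c), x - c⟫_ℝ / 2
          = f x - ⟪T (x - c), x - c⟫_ℝ / 2 - (f c - 0 / 2) by ring]
      calc |f x - ⟪T (x - c), x - c⟫_ℝ / 2 - (f c - 0 / 2)| ≤ δ * r * ‖x - c‖ := hMVT
        _ = δ * r * r := by rw [← hrdef]
    calc |f x - f c - ⟪T (x - c), x - c⟫_ℝ / 2| ≤ δ * r * r := habs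
      _ = δ * r ^ 2 := by ring
  -- conclusion
  rw [Metric.tendsto_nhdsWithin_nhds]
  intro δ hδ
  obtain ⟨r₀, hr₀pos, hr₀ε, htay⟩ := taylor (δ/4) (by linarith)
  refine ⟨r₀, hr₀pos, ?_⟩
  intro r hr hdist
  have hrpos : (0:ℝ) < r := hr
  have hrr₀ : r < r₀ := by rwa [Real.dist_eq, sub_zero, abs_of_pos hrpos] at hdist
  have hrε : r ≤ ε := le_trans hrr₀.le hr₀ε
  obtain ⟨⟨x₀, hx₀n, hx₀f⟩, hmin⟩ := hm r ⟨hrpos, hrε⟩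
  -- upper bound via the eigenvector
  set u : EuclideanSpace ℝ (Fin n) := ‖v‖⁻¹ • v with hudef
  have hu : ‖u‖ = 1 := by
    rw [hudef, norm_smul, norm_inv, norm_norm, inv_mul_cancel₀ (norm_ne_zero_iff.mpr hv0)]
  set x₁ : EuclideanSpace ℝ (Fin n) := c + r • u with hx₁def
  have hx₁ : ‖x₁ - c‖ = r := by
    rw [hx₁def, add_sub_cancel_left, norm_smul, hu, Real.norm_eq_abs,
      abs_of_pos hrpos, mul_one]
  have hTu : T (r • u) = μ₁ • (r • u) := by
    rw [map_smul, hudef, map_smul, hvT]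
    rw [smul_smul, smul_smul, smul_smul, smul_smul]
    ring_nf
  have hQ1 : ⟪T (x₁ - c), x₁ - c⟫_ℝ = μ₁ * r ^ 2 := by
    have hd : x₁ - c = r • u := by rw [hx₁def, add_sub_cancel_left]
    rw [hd, hTu, real_inner_smul_left, real_inner_self_eq_norm_sq,
      norm_smul, hu, Real.norm_eq_abs, abs_of_pos hrpos, mul_one]
  have h2 := htay x₁ (by rw [hx₁]; exact hrr₀.le)
  rw [hx₁, hQ1] at h2
  have hub : m r ≤ f c + μ₁ / 2 * r ^ 2 + δ/4 * r ^ 2 := by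
    have h1 := hmin x₁ hx₁
    have h3 := (abs_le.mp h2).2
    linarith
  have h4 := htay x₀ (by rw [hx₀n]; exact hrr₀.le)
  rw [hx₀n] at h4
  have h5 := hquad (x₀ - c)
  rw [hx₀n] at h5
  have hlb : f c + μ₁ / 2 * r ^ 2 - δ/4 * r ^ 2 ≤ m r := by
    have h6 := (abs_le.mp h4).1
    rw [← hx₀f]
    linarith
  rw [Real.dist_eq, sub_zero]
  have hr2 : (0:ℝ) < r ^ 2 := by positivity
  have habs2 : |m r - f c - μ₁ / 2 * r ^ 2| ≤ δ/4 * r ^ 2 :=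
    abs_le.mpr ⟨by linarith, by linarith⟩
  rw [abs_div, abs_of_pos hr2, div_lt_iff₀ hr2]
  calc |m r - f c - μ₁ / 2 * r ^ 2| ≤ δ/4 * r ^ 2 := habs2
    _ < δ * r ^ 2 := by nlinarith
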